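/- The Bures distance between positive definite density matrices satisfies [D^{Bures}(P,Q)]² = 2(1 − Tr((√P Q √P)^{1/2})) ≤ Tr((√P − √Q)²) = 2(1 − Tr(√P √Q)). -/

import Mathlib

open Matrix
open scoped ComplexOrder

set_option maxHeartbeats 1000000

/-- The positive semidefinite square root of a positive semidefinite matrix
(the definition `Matrix.PosSemidef.sqrt` of the older Mathlib, removed since). -/
noncomputable def Matrix.PosSemidef.sqrt {𝕜 : Type*} [RCLike 𝕜] {n : Type*} [Fintype n]
    [DecidableEq n] {A : Matrix n n 𝕜} (hA : A.PosSemidef) : Matrix n n 𝕜 :=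
  hA.1.eigenvectorUnitary.1 * diagonal ((↑) ∘ (√·) ∘ hA.1.eigenvalues) *
    (star hA.1.eigenvectorUnitary : Matrix n n 𝕜)

lemma Matrix.PosSemidef.sqrt_mul_self {n : Type*} [Fintype n]
    [DecidableEq n] {A : Matrix n n ℂ} (hA : A.PosSemidef) : hA.sqrt * hA.sqrt = A := by
  have hUU : (star hA.1.eigenvectorUnitary : Matrix n n ℂ) * hA.1.eigenvectorUnitary.1 = 1 :=
    Unitary.coe_star_mul_self _
  have hD : diagonal (((↑) ∘ (√·) ∘ hA.1.eigenvalues : n → ℂ)) *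
      diagonal ((↑) ∘ (√·) ∘ hA.1.eigenvalues) = diagonal (RCLike.ofReal ∘ hA.1.eigenvalues) := by
    rw [diagonal_mul_diagonal]
    congr 1
    funext i
    simp only [Function.comp_apply]
    rw [← Complex.ofReal_mul, Real.mul_self_sqrt (hA.eigenvalues_nonneg i)]
    rfl
  unfold Matrix.PosSemidef.sqrt
  conv_rhs => rw [hA.1.spectral_theorem, Unitary.conjStarAlgAut_apply]
  rw [← hD]
  simp only [Matrix.mul_assoc]
  rw [← Matrix.mul_assoc (star (hA.1.eigenvectorUnitary : Matrix n n ℂ)), hUU, Matrix.one_mul]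
  rfl

lemma Matrix.PosSemidef.posSemidef_sqrt {n : Type*} [Fintype n]
    [DecidableEq n] {A : Matrix n n ℂ} (hA : A.PosSemidef) : hA.sqrt.PosSemidef := by
  unfold Matrix.PosSemidef.sqrt
  have h : (diagonal (((↑) ∘ (√·) ∘ hA.1.eigenvalues : n → ℂ))).PosSemidef :=
    posSemidef_diagonal_iff.2 fun i => Complex.zero_le_real.2 (Real.sqrt_nonneg _)
  have := h.mul_mul_conjTranspose_same (hA.1.eigenvectorUnitary : Matrix n n ℂ)
  rwa [← star_eq_conjTranspose] at this

private lemma trace_nonneg_of_posSemidef {n : ℕ} {M : Matrix (Fin n) (Fin n) ℂ}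
    (hM : M.PosSemidef) : 0 ≤ M.trace := by
  exact hM.trace_nonneg

/-- The squared Bures distance between density matrices,
`[D^{Bures}(P,Q)]² = 2 (1 − Tr ((√P Q √P)^{1/2}))`, is bounded above by
`Tr ((√P − √Q)²) = 2 (1 − Tr (√P √Q))`. -/
theorem bures_distance_bound {n : ℕ}
    (P Q : Matrix (Fin n) (Fin n) ℂ) (hP : P.PosDef) (hQ : Q.PosDef)
    (hPtr : P.trace = 1) (hQtr : Q.trace = 1)
    (hSQS : (hP.posSemidef.sqrt * Q * hP.posSemidef.sqrt).PosSemidef) :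
    2 * (1 - (hSQS.sqrt).trace) ≤
      ((hP.posSemidef.sqrt - hQ.posSemidef.sqrt) *
        (hP.posSemidef.sqrt - hQ.posSemidef.sqrt)).trace ∧
    ((hP.posSemidef.sqrt - hQ.posSemidef.sqrt) *
        (hP.posSemidef.sqrt - hQ.posSemidef.sqrt)).trace =
      2 * (1 - (hP.posSemidef.sqrt * hQ.posSemidef.sqrt).trace) := by
  set S := hP.posSemidef.sqrt with hS
  set T := hQ.posSemidef.sqrt with hT
  set M := hSQS.sqrt with hM
  have hS2 : S * S = P := hP.posSemidef.sqrt_mul_self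
  have hT2 : T * T = Q := hQ.posSemidef.sqrt_mul_self
  have hM2 : M * M = S * Q * S := hSQS.sqrt_mul_self
  have hSH : Sᴴ = S := hP.posSemidef.posSemidef_sqrt.1
  have hTH : Tᴴ = T := hQ.posSemidef.posSemidef_sqrt.1
  have hMH : Mᴴ = M := hSQS.posSemidef_sqrt.1
  -- determinants
  have hdetS : IsUnit S.det := by
    have h : S.det * S.det = P.det := by rw [← Matrix.det_mul, hS2]
    have := hP.det_pos.ne'
    refine isUnit_iff_ne_zero.2 fun h0 => this ?_
    rw [← h, h0, mul_zero]
  have hdetM : IsUnit M.det := by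
    have h : M.det * M.det = S.det * Q.det * S.det := by
      rw [← Matrix.det_mul, hM2, Matrix.det_mul, Matrix.det_mul]
    refine isUnit_iff_ne_zero.2 fun h0 => ?_
    rw [h0, zero_mul] at h
    have : S.det * Q.det * S.det ≠ 0 :=
      mul_ne_zero (mul_ne_zero hdetS.ne_zero hQ.det_pos.ne') hdetS.ne_zero
    exact this h.symm
  have hMinv : M⁻¹ * M = 1 := Matrix.nonsing_inv_mul M hdetM
  have hinvM : M * M⁻¹ = 1 := Matrix.mul_nonsing_inv M hdetM
  -- the equality part
  have heq : ((S - T) * (S - T)).trace = 2 * (1 - (S * T).trace) := by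
    have hexp : (S - T) * (S - T) = S * S - S * T - T * S + T * T := by
      noncomm_ring
    rw [hexp, Matrix.trace_add, Matrix.trace_sub, Matrix.trace_sub, hS2, hT2,
      Matrix.trace_mul_comm T S, hPtr, hQtr]
    ring
  refine ⟨?_, heq⟩
  -- the inequality: reduces to (S*T).trace ≤ M.trace
  have hPSD : ((M - S * T)ᴴ * M⁻¹ * (M - S * T)).PosSemidef :=
    hSQS.posSemidef_sqrt.inv.conjTranspose_mul_mul_same (M - S * T)
  have hkey : 0 ≤ ((M - S * T)ᴴ * M⁻¹ * (M - S * T)).trace :=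
    trace_nonneg_of_posSemidef hPSD
  have hXH : (M - S * T)ᴴ = M - T * S := by
    rw [Matrix.conjTranspose_sub, Matrix.conjTranspose_mul, hMH, hSH, hTH]
  have hexp2 : (M - S * T)ᴴ * M⁻¹ * (M - S * T)
      = M * M⁻¹ * M - M * M⁻¹ * (S * T) - T * S * M⁻¹ * M + T * S * M⁻¹ * (S * T) := by
    rw [hXH]; noncomm_ring
  have htr4 : (T * S * M⁻¹ * (S * T)).trace = M.trace := by
    have e1 : T * S * M⁻¹ * (S * T) = (T * S * M⁻¹ * S) * T := by noncomm_ring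
    rw [e1, Matrix.trace_mul_comm]
    have e2 : T * (T * S * M⁻¹ * S) = (T * T * S * M⁻¹) * S := by noncomm_ring
    rw [e2, Matrix.trace_mul_comm]
    have e3 : S * (T * T * S * M⁻¹) = (S * (T * T) * S) * M⁻¹ := by noncomm_ring
    rw [e3, hT2, ← hM2, Matrix.trace_mul_comm, ← Matrix.mul_assoc, hMinv, Matrix.one_mul]
  rw [hexp2] at hkey
  have hsimp : M * M⁻¹ * M - M * M⁻¹ * (S * T) - T * S * M⁻¹ * M + T * S * M⁻¹ * (S * T)
      = M - S * T - T * S + T * S * M⁻¹ * (S * T) := by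
    rw [hinvM, Matrix.one_mul, Matrix.one_mul, Matrix.mul_assoc (T * S) M⁻¹ M, hMinv,
      Matrix.mul_one]
  rw [hsimp, Matrix.trace_add, Matrix.trace_sub, Matrix.trace_sub, htr4,
    Matrix.trace_mul_comm T S] at hkey
  -- hkey : 0 ≤ M.trace - (S*T).trace - (S*T).trace + M.trace
  have hST_le : (S * T).trace ≤ M.trace := by
    rw [Complex.le_def] at hkey ⊢
    constructor
    · have := hkey.1
      simp only [Complex.add_re, Complex.sub_re, Complex.zero_re] at this
      linarith
    · have := hkey.2
      simp only [Complex.add_im, Complex.sub_im, Complex.zero_im] at this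
      linarith
  rw [heq]
  have h1 : (1 : ℂ) - M.trace ≤ 1 - (S * T).trace := sub_le_sub_left hST_le 1
  exact mul_le_mul_of_nonneg_left h1 (by rw [Complex.le_def]; norm_num : (0:ℂ) ≤ 2)
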